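/- Let π₁, π₂ be pairings of [n] (n even). Then there exist permutations σ₁, σ₂ ∈ Sₙ such that σᵢ maps the standard pairing {{1,2},…,{n−1,n}} to πᵢ for i = 1,2, and sgn(σ₂σ₁⁻¹) = (−1)^{n/2 − #(π₁ ∨ π₂)}, where both σᵢ map the odd numbers onto a common set of representatives, one from each pair, chosen consistently for π₁ and π₂. -/

import Mathlib

/-- The number of blocks of the join of the orbit partitions of two permutations. -/
noncomputable def jointOrbitCount {I : Type*} (π₁ π₂ : Equiv.Perm I) : ℕ :=
  Nat.card (MulAction.orbitRel.Quotient
    (Subgroup.closure {π₁, π₂} : Subgroup (Equiv.Perm I)) I)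

/-- A pairing: a fixed-point-free involution. -/
def IsPairing {I : Type*} (π : Equiv.Perm I) : Prop :=
  π * π = 1 ∧ ∀ x, π x ≠ x

/-- σ maps the standard pairing {{0,1},{2,3},…} of Fin n to the pairing π:
the pairs of π are exactly the sets {σ(2k), σ(2k+1)}. -/
def MapsStd {n : ℕ} (σ π : Equiv.Perm (Fin n)) : Prop :=
  ∀ k : Fin n, k.1 % 2 = 0 → ∀ h1 : k.1 + 1 < n, π (σ k) = σ ⟨k.1 + 1, h1⟩

/-- The even positions of Fin n (corresponding to the odd numbers 1,3,…,n−1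
in the paper's 1-indexed convention). -/
def Evens (n : ℕ) : Set (Fin n) := {k | k.1 % 2 = 0}

section Helpers
open Equiv Equiv.Perm MulAction


lemma orbit_rel_iff {α : Type*} (g : Perm α) (x y : α) :
    (orbitRel (Subgroup.closure {g} : Subgroup (Perm α)) α) x y ↔ g.SameCycle x y := by
  rw [orbitRel_apply, MulAction.mem_orbit_iff]
  constructor
  · rintro ⟨⟨h, hh⟩, rfl⟩
    rw [← Subgroup.zpowers_eq_closure, Subgroup.mem_zpowers_iff] at hh
    obtain ⟨k, rfl⟩ := hh
    exact ⟨-k, by simp [Subgroup.smul_def]⟩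
  · rintro ⟨k, rfl⟩
    exact ⟨⟨g ^ (-k), by rw [← Subgroup.zpowers_eq_closure]; exact ⟨-k, rfl⟩⟩, by simp [Subgroup.smul_def]⟩

lemma orbit_count {α : Type*} [Fintype α] [DecidableEq α] (g : Perm α) :
    Nat.card (orbitRel.Quotient (Subgroup.closure {g} : Subgroup (Perm α)) α)
      = (Fintype.card α - g.support.card) + Multiset.card g.cycleType := by
  classical
  set H : Subgroup (Perm α) := Subgroup.closure {g}
  let γ := {x : α // x ∉ g.support} ⊕ {σ // σ ∈ g.cycleFactorsFinset}
  let f : α → γ := fun x =>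
    if h : x ∈ g.support then Sum.inr ⟨g.cycleOf x, cycleOf_mem_cycleFactorsFinset_iff.mpr h⟩
    else Sum.inl ⟨x, h⟩
  have hf : ∀ a b : α, (orbitRel H α) a b → f a = f b := by
    intro a b hab
    rw [orbit_rel_iff] at hab
    obtain ⟨k, rfl⟩ := hab
    by_cases h : a ∈ g.support
    · have h2 : (g ^ k) a ∈ g.support := zpow_apply_mem_support.mpr h
      have : g.cycleOf a = g.cycleOf ((g ^ k) a) := (SameCycle.cycleOf_eq ⟨k, rfl⟩)
      simp only [f, dif_pos h, dif_pos h2, this]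
    · have ha : g a = a := by rwa [notMem_support] at h
      rw [zpow_apply_eq_self_of_apply_eq_self ha]
  let F : orbitRel.Quotient H α → γ := Quotient.lift f hf
  have hbij : Function.Bijective F := by
    constructor
    · intro q1 q2
      induction q1 using Quotient.inductionOn with | h a =>
      induction q2 using Quotient.inductionOn with | h b =>
      intro hab
      simp only [F, Quotient.lift_mk] at hab
      refine Quotient.sound ((orbit_rel_iff g a b).mpr ?_)
      simp only [f] at hab
      by_cases h : a ∈ g.support <;> by_cases h' : b ∈ g.support
      · rw [dif_pos h, dif_pos h', Sum.inr.injEq, Subtype.mk.injEq] at hab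
        have hco : g.cycleOf a = g.cycleOf b := hab
        have : b ∈ (g.cycleOf a).support := by
          rw [hco, mem_support_cycleOf_iff]
          exact ⟨SameCycle.refl _ _, h'⟩
        exact (mem_support_cycleOf_iff.mp this).1
      · rw [dif_pos h, dif_neg h'] at hab
        exact absurd hab (by simp)
      · rw [dif_neg h, dif_pos h'] at hab
        exact absurd hab (by simp)
      · rw [dif_neg h, dif_neg h', Sum.inl.injEq, Subtype.mk.injEq] at hab
        have : a = b := hab
        exact this ▸ SameCycle.refl _ _
    · rintro (⟨x, hx⟩ | ⟨σ, hσ⟩)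
      · exact ⟨Quotient.mk _ x, by simp only [F, Quotient.lift_mk, f, dif_neg hx]⟩
      · have hc : σ.IsCycle := (mem_cycleFactorsFinset_iff.mp hσ).1
        obtain ⟨x, hx⟩ := hc.nonempty_support
        have hco : σ = g.cycleOf x := cycle_is_cycleOf hx hσ
        have hxs : x ∈ g.support := cycleOf_mem_cycleFactorsFinset_iff.mp (hco ▸ hσ)
        refine ⟨Quotient.mk _ x, ?_⟩
        simp only [F, Quotient.lift_mk, f, dif_pos hxs]
        congr 1
        exact Subtype.ext hco.symm
  have := Nat.card_eq_of_bijective F hbij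
  rw [this, Nat.card_eq_fintype_card, Fintype.card_sum, Fintype.card_subtype_compl]
  congr 2
  · exact Fintype.card_coe g.support
  · simp [cycleType]

lemma sign_orbit_count {α : Type*} [Fintype α] [DecidableEq α] (g : Perm α) :
    Perm.sign g = (-1 : ℤˣ) ^ (Fintype.card α -
      Nat.card (orbitRel.Quotient (Subgroup.closure {g} : Subgroup (Perm α)) α)) := by
  rw [orbit_count, sign_of_cycleType]
  set s := g.support.card
  set t := Multiset.card g.cycleType with ht
  have h1 : g.cycleType.sum = s := g.sum_cycleType
  have hts : t ≤ s := by
    rw [← h1]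
    have := Multiset.card_nsmul_le_sum (s := g.cycleType) (a := 1)
      (fun x hx => (one_lt_of_mem_cycleType hx).le)
    simpa using this
  have hsn : s ≤ Fintype.card α := Finset.card_le_univ _
  rw [h1]
  have hexp : Fintype.card α - (Fintype.card α - s + t) = s - t := by omega
  rw [hexp]
  have : s + t = (s - t) + 2 * t := by omega
  rw [this, pow_add, two_mul, pow_add]
  simp

end Helpers

open Equiv Equiv.Perm MulAction in
theorem stmt12 (n : ℕ) (hn : Even n) (π₁ π₂ : Equiv.Perm (Fin n))
    (h₁ : IsPairing π₁) (h₂ : IsPairing π₂) :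
    ∃ (R : Set (Fin n)) (σ₁ σ₂ : Equiv.Perm (Fin n)),
      -- R contains exactly one element of each pair of π₁ and of π₂:
      (∀ x, x ∈ R ↔ π₁ x ∉ R) ∧ (∀ x, x ∈ R ↔ π₂ x ∉ R) ∧
      -- σᵢ maps the standard pairing to πᵢ:
      MapsStd σ₁ π₁ ∧ MapsStd σ₂ π₂ ∧
      -- both σᵢ map the odd numbers onto the common set R of representatives:
      (⇑σ₁) '' Evens n = R ∧ (⇑σ₂) '' Evens n = R ∧
      Equiv.Perm.sign (σ₂ * σ₁⁻¹) = (-1) ^ (n / 2 - jointOrbitCount π₁ π₂) := by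
  classical
  have hn2 : n % 2 = 0 := Nat.even_iff.mp hn
  have hπ₁π₁ : ∀ x, π₁ (π₁ x) = x := fun x => by
    have := Equiv.ext_iff.mp h₁.1 x; simpa using this
  have hπ₂π₂ : ∀ x, π₂ (π₂ x) = x := fun x => by
    have := Equiv.ext_iff.mp h₂.1 x; simpa using this
  have hπ₁inv : π₁⁻¹ = π₁ := inv_eq_of_mul_eq_one_right h₁.1
  have hπ₂inv : π₂⁻¹ = π₂ := inv_eq_of_mul_eq_one_right h₂.1
  set c : Equiv.Perm (Fin n) := π₂ * π₁ with hcdef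
  have hkey : ∀ k : ℤ, π₁ * c ^ k = c ^ (-k) * π₁ := by
    intro k
    have h0 : π₁ * c * π₁⁻¹ = c⁻¹ := by
      rw [hcdef, mul_inv_rev, hπ₁inv, hπ₂inv, ← mul_assoc, mul_assoc (π₁ * π₂), h₁.1, mul_one]
    have h1 : c ^ (-k) = π₁ * c ^ k * π₁⁻¹ := by
      rw [← conj_zpow, h0, inv_zpow, zpow_neg]
    rw [h1, inv_mul_cancel_right]
  have hkeyp : ∀ (k : ℤ) (x : Fin n), π₁ ((c ^ k) x) = (c ^ (-k)) (π₁ x) := by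
    intro k x
    have := Equiv.ext_iff.mp (hkey k) x
    simpa [Equiv.Perm.mul_apply] using this
  have hpoint : ∀ (a b : ℤ) (x : Fin n), (c ^ a) ((c ^ b) x) = (c ^ (a + b)) x := by
    intro a b x
    rw [← Equiv.Perm.mul_apply, ← zpow_add]
  have hcπ₁ : ∀ x, c (π₁ x) = π₂ x := fun x => by
    simp [hcdef, Equiv.Perm.mul_apply, hπ₁π₁]
  have hfold : ∀ (x : Fin n) (k : ℤ), (c ^ k) x ≠ π₁ x := by
    intro x k hk
    rcases Int.even_or_odd k with ⟨t, ht⟩ | ⟨t, ht⟩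
    · apply h₁.2 ((c ^ t) x)
      rw [hkeyp t x, ← hk, ht, hpoint, show -t + (t + t) = t by ring]
    · apply h₂.2 ((c ^ (t + 1)) x)
      have e1 : π₂ ((c ^ (t + 1)) x) = c (π₁ ((c ^ (t + 1)) x)) := (hcπ₁ _).symm
      rw [e1, hkeyp (t + 1) x, ← hk, ht, hpoint,
        show -(t + 1) + (2 * t + 1) = t by ring,
        show c ((c ^ t) x) = (c ^ (1 : ℤ)) ((c ^ t) x) by rw [zpow_one], hpoint,
        show (1 : ℤ) + t = t + 1 by ring]
  -- the cyclic-orbit setoid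
  let sc : Setoid (Fin n) :=
    ⟨fun x y => ∃ k : ℤ, (c ^ k) x = y,
     ⟨fun x => ⟨0, by simp⟩,
      fun {x y} h => by
        obtain ⟨k, hk⟩ := h
        exact ⟨-k, by rw [← hk, hpoint]; simp⟩,
      fun {x y z} h h' => by
        obtain ⟨k, hk⟩ := h
        obtain ⟨l, hl⟩ := h'
        exact ⟨l + k, by rw [← hl, ← hk, hpoint]⟩⟩⟩
  let ι : Quotient sc → Quotient sc :=
    Quotient.map π₁ (by
      intro a b hab
      obtain ⟨k, hk⟩ := hab
      exact ⟨-k, by rw [← hkeyp, hk]⟩)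
  have hιmk : ∀ x, ι (Quotient.mk sc x) = Quotient.mk sc (π₁ x) := fun x => rfl
  have hιι : ∀ q, ι (ι q) = q := by
    intro q
    induction q using Quotient.inductionOn with | h x =>
    rw [hιmk, hιmk, hπ₁π₁]
  have hιne : ∀ q, ι q ≠ q := by
    intro q
    induction q using Quotient.inductionOn with | h x =>
    intro h
    rw [hιmk] at h
    obtain ⟨k, hk⟩ := Quotient.exact h
    apply hfold x (-k)
    conv_lhs => rw [← hk]
    rw [hpoint]
    simp
  -- the pairing setoid on classes
  let s2 : Setoid (Quotient sc) :=
    ⟨fun a b => b = a ∨ b = ι a,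
     ⟨fun a => Or.inl rfl,
      fun {a b} h => by
        rcases h with rfl | rfl
        · exact Or.inl rfl
        · exact Or.inr (hιι a).symm,
      fun {a b c'} h h' => by
        rcases h with rfl | rfl <;> rcases h' with rfl | rfl <;> simp [hιι]⟩⟩
  set T : Set (Quotient sc) := {a | (Quotient.mk s2 a).out = a} with hTdef
  have hmk2ι : ∀ a, Quotient.mk s2 (ι a) = Quotient.mk s2 a := fun a =>
    Quotient.sound (Or.inr (hιι a).symm)
  have hT : ∀ a, a ∈ T ↔ ι a ∉ T := by
    intro a
    have hout : (Quotient.mk s2 a).out = a ∨ (Quotient.mk s2 a).out = ι a := by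
      have h := Quotient.mk_out (s := s2) a
      rcases h with h | h
      · exact Or.inl h.symm
      · refine Or.inr ?_
        have h2 := congrArg ι h
        rw [hιι] at h2
        exact h2.symm
    have hne : ι a ≠ a := hιne a
    simp only [hTdef, Set.mem_setOf_eq]
    constructor
    · intro h1 h2
      rw [hmk2ι a] at h2
      exact hne (h2.symm.trans h1)
    · intro h2
      rcases hout with h | h
      · exact h
      · exact absurd (by rw [hmk2ι]; exact h) h2
  set R : Set (Fin n) := {x | Quotient.mk sc x ∈ T} with hRdef
  have hR1 : ∀ x, x ∈ R ↔ π₁ x ∉ R := by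
    intro x
    show Quotient.mk sc x ∈ T ↔ Quotient.mk sc (π₁ x) ∉ T
    rw [← hιmk]
    exact hT _
  have hmkc : ∀ (k : ℤ) (x : Fin n), Quotient.mk sc ((c ^ k) x) = Quotient.mk sc x :=
    fun k x => Quotient.sound ⟨-k, by rw [hpoint]; simp⟩
  have hR2 : ∀ x, x ∈ R ↔ π₂ x ∉ R := by
    intro x
    show Quotient.mk sc x ∈ T ↔ Quotient.mk sc (π₂ x) ∉ T
    have h : Quotient.mk sc (π₂ x) = ι (Quotient.mk sc x) := by
      rw [← hcπ₁ x, show c (π₁ x) = (c ^ (1 : ℤ)) (π₁ x) by rw [zpow_one], hmkc, hιmk]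
    rw [h]
    exact hT _
  have hRc : ∀ (k : ℤ) (x : Fin n), x ∈ R ↔ (c ^ k) x ∈ R := by
    intro k x
    show Quotient.mk sc x ∈ T ↔ Quotient.mk sc ((c ^ k) x) ∈ T
    rw [hmkc]
  have hπ₁R : ∀ x : Fin n, x ∉ R → π₁ x ∈ R := by
    intro x hx
    by_contra hc'
    exact hx ((hR1 x).mpr hc')
  -- cardinalities
  let eqv : R ≃ {x : Fin n // x ∉ R} :=
    { toFun := fun x => ⟨π₁ x.1, (hR1 x.1).mp x.2⟩
      invFun := fun y => ⟨π₁ y.1, hπ₁R y.1 y.2⟩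
      left_inv := fun x => Subtype.ext (hπ₁π₁ x.1)
      right_inv := fun y => Subtype.ext (hπ₁π₁ y.1) }
  have hcompl : Fintype.card {x : Fin n // x ∉ R} = Fintype.card (Fin n) - Fintype.card R :=
    Fintype.card_subtype_compl _
  have hle : Fintype.card R ≤ Fintype.card (Fin n) := Fintype.card_subtype_le _
  have heq2 : Fintype.card R = Fintype.card {x : Fin n // x ∉ R} := Fintype.card_congr eqv
  have hcardR : Fintype.card R = n / 2 := by
    rw [Fintype.card_fin] at hcompl hle
    omega
  have hcardRc : Fintype.card {x : Fin n // x ∉ R} = n / 2 := by rw [← heq2, hcardR]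
  let e : Fin (n / 2) ≃ R := (Fintype.equivFinOfCardEq hcardR).symm
  have hdvd : 2 ∣ n := Nat.dvd_of_mod_eq_zero hn2
  have hj : ∀ k : Fin n, k.1 / 2 < n / 2 := fun k =>
    Nat.div_lt_div_of_lt_of_dvd hdvd k.isLt
  -- the two explicit permutations
  have hinjgen : ∀ π : Equiv.Perm (Fin n), (∀ x, x ∈ R ↔ π x ∉ R) →
      Function.Injective (fun k : Fin n =>
        if k.1 % 2 = 0 then ((e ⟨k.1 / 2, hj k⟩ : R) : Fin n) else π (e ⟨k.1 / 2, hj k⟩)) := by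
    intro π hR' a b hab
    simp only at hab
    have hmemE : ∀ k : Fin n, ((e ⟨k.1 / 2, hj k⟩ : R) : Fin n) ∈ R := fun k => (e _).2
    by_cases ha : a.1 % 2 = 0 <;> by_cases hb : b.1 % 2 = 0
    · rw [if_pos ha, if_pos hb] at hab
      have h1 := e.injective (Subtype.ext hab)
      have h2 : a.1 / 2 = b.1 / 2 := congrArg Fin.val h1
      exact Fin.ext (by omega)
    · rw [if_pos ha, if_neg hb] at hab
      exact absurd (hab ▸ hmemE a) ((hR' _).mp (hmemE b))
    · rw [if_neg ha, if_pos hb] at hab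
      exact absurd (hab ▸ ((hR' _).mp (hmemE a))) (by simpa using hmemE b)
    · rw [if_neg ha, if_neg hb] at hab
      have h1 := e.injective (Subtype.ext (π.injective hab))
      have h2 : a.1 / 2 = b.1 / 2 := congrArg Fin.val h1
      exact Fin.ext (by omega)
  let f₁ : Fin n → Fin n := fun k =>
    if k.1 % 2 = 0 then ((e ⟨k.1 / 2, hj k⟩ : R) : Fin n) else π₁ (e ⟨k.1 / 2, hj k⟩)
  let f₂ : Fin n → Fin n := fun k =>
    if k.1 % 2 = 0 then ((e ⟨k.1 / 2, hj k⟩ : R) : Fin n) else π₂ (e ⟨k.1 / 2, hj k⟩)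
  let σ₁ : Equiv.Perm (Fin n) :=
    Equiv.ofBijective f₁ (Finite.injective_iff_bijective.mp (hinjgen π₁ hR1))
  let σ₂ : Equiv.Perm (Fin n) :=
    Equiv.ofBijective f₂ (Finite.injective_iff_bijective.mp (hinjgen π₂ hR2))
  have hσ₁app : ∀ k, σ₁ k = f₁ k := fun k => rfl
  have hσ₂app : ∀ k, σ₂ k = f₂ k := fun k => rfl
  -- MapsStd
  have heven : ∀ (π σ : Equiv.Perm (Fin n)),
      (∀ k : Fin n, σ k = if k.1 % 2 = 0 then ((e ⟨k.1 / 2, hj k⟩ : R) : Fin n)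
        else π (e ⟨k.1 / 2, hj k⟩)) →
      ∀ k : Fin n, k.1 % 2 = 0 → σ k = ((e ⟨k.1 / 2, hj k⟩ : R) : Fin n) := by
    intro π σ hσ k hk
    rw [hσ k]
    exact if_pos hk
  have hodd : ∀ (π σ : Equiv.Perm (Fin n)),
      (∀ k : Fin n, σ k = if k.1 % 2 = 0 then ((e ⟨k.1 / 2, hj k⟩ : R) : Fin n)
        else π (e ⟨k.1 / 2, hj k⟩)) →
      ∀ k : Fin n, ¬ k.1 % 2 = 0 → σ k = π (e ⟨k.1 / 2, hj k⟩) := by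
    intro π σ hσ k hk
    rw [hσ k]
    exact if_neg hk
  have hmaps : ∀ (π : Equiv.Perm (Fin n)) (σ : Equiv.Perm (Fin n)),
      (∀ k : Fin n, σ k = if k.1 % 2 = 0 then ((e ⟨k.1 / 2, hj k⟩ : R) : Fin n)
        else π (e ⟨k.1 / 2, hj k⟩)) → MapsStd σ π := by
    intro π σ hσ k hk h1
    rw [heven π σ hσ k hk, hodd π σ hσ ⟨k.1 + 1, h1⟩ (by show ¬ (k.1 + 1) % 2 = 0; omega),
      show (⟨(⟨k.1 + 1, h1⟩ : Fin n).1 / 2, hj ⟨k.1 + 1, h1⟩⟩ : Fin (n / 2))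
          = ⟨k.1 / 2, hj k⟩ from Fin.ext (by show (k.1 + 1) / 2 = k.1 / 2; omega)]
  -- images
  have himg : ∀ (π : Equiv.Perm (Fin n)) (σ : Equiv.Perm (Fin n)),
      (∀ k : Fin n, σ k = if k.1 % 2 = 0 then ((e ⟨k.1 / 2, hj k⟩ : R) : Fin n)
        else π (e ⟨k.1 / 2, hj k⟩)) → (⇑σ) '' Evens n = R := by
    intro π σ hσ
    ext y
    constructor
    · rintro ⟨k, hk, rfl⟩
      have hk' : k.1 % 2 = 0 := hk
      rw [heven π σ hσ k hk']
      exact (e _).2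
    · intro hy
      set i : Fin (n / 2) := e.symm ⟨y, hy⟩ with hi
      have h2i : 2 * i.1 < n := by have := i.isLt; omega
      refine ⟨⟨2 * i.1, h2i⟩, by show (2 * i.1) % 2 = 0; omega, ?_⟩
      have h4 : ((e i : R) : Fin n) = y := by rw [hi, Equiv.apply_symm_apply]
      rw [heven π σ hσ ⟨2 * i.1, h2i⟩ (by show (2 * i.1) % 2 = 0; omega),
        show (⟨(⟨2 * i.1, h2i⟩ : Fin n).1 / 2, hj ⟨2 * i.1, h2i⟩⟩ : Fin (n / 2)) = i
          from Fin.ext (by show (2 * i.1) / 2 = i.1; omega), h4]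
  -- the quotient permutation
  have hcp : ∀ x : Fin n, x ∉ R ↔ c x ∉ R := fun x =>
    not_iff_not.mpr (by simpa using hRc 1 x)
  let c' : Equiv.Perm {x : Fin n // x ∉ R} := c.subtypePerm (fun x => (hcp x).symm)
  have hστ : σ₂ = Equiv.Perm.ofSubtype c' * σ₁ := by
    refine Equiv.ext fun k => ?_
    rw [Equiv.Perm.mul_apply, hσ₁app, hσ₂app]
    by_cases hk : k.1 % 2 = 0
    · show f₂ k = Equiv.Perm.ofSubtype c' (f₁ k)
      rw [show f₁ k = ((e ⟨k.1 / 2, hj k⟩ : R) : Fin n) from if_pos hk,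
        show f₂ k = ((e ⟨k.1 / 2, hj k⟩ : R) : Fin n) from if_pos hk,
        Equiv.Perm.ofSubtype_apply_of_not_mem c' (not_not.mpr (e _).2)]
    · show f₂ k = Equiv.Perm.ofSubtype c' (f₁ k)
      rw [show f₁ k = π₁ (e ⟨k.1 / 2, hj k⟩) from if_neg hk,
        show f₂ k = π₂ (e ⟨k.1 / 2, hj k⟩) from if_neg hk,
        Equiv.Perm.ofSubtype_apply_of_mem c' ((hR1 _).mp (e _).2)]
      exact (hcπ₁ _).symm
  have hτ : σ₂ * σ₁⁻¹ = Equiv.Perm.ofSubtype c' := by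
    rw [hστ, mul_inv_cancel_right]
  -- the orbit count identification
  have hc'z : ∀ (k : ℤ) (x : {x : Fin n // x ∉ R}), ((c' ^ k) x : Fin n) = (c ^ k) x.1 := by
    intro k x
    rw [Equiv.Perm.subtypePerm_zpow]
    rfl
  set G : Subgroup (Equiv.Perm (Fin n)) := Subgroup.closure {π₁, π₂} with hGdef
  have hπ₁G : π₁ ∈ G := Subgroup.subset_closure (by simp)
  have hπ₂G : π₂ ∈ G := Subgroup.subset_closure (by simp)
  have hcG : ∀ k : ℤ, c ^ k ∈ G := fun k => zpow_mem (mul_mem hπ₂G hπ₁G) k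
  have hGstruct : ∀ g ∈ G, (∃ k : ℤ, g = c ^ k) ∨ (∃ k : ℤ, g = c ^ k * π₁) := by
    intro g hg
    induction hg using Subgroup.closure_induction with
    | mem x hx =>
        rcases hx with rfl | rfl
        · exact Or.inr ⟨0, by simp⟩
        · refine Or.inr ⟨1, ?_⟩
          rw [zpow_one, hcdef, mul_assoc, h₁.1, mul_one]
    | one => exact Or.inl ⟨0, by simp⟩
    | mul x y hx hy ihx ihy =>
        rcases ihx with ⟨k, rfl⟩ | ⟨k, rfl⟩ <;> rcases ihy with ⟨l, rfl⟩ | ⟨l, rfl⟩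
        · exact Or.inl ⟨k + l, by rw [zpow_add]⟩
        · exact Or.inr ⟨k + l, by rw [zpow_add, mul_assoc]⟩
        · refine Or.inr ⟨k + -l, ?_⟩
          rw [mul_assoc, hkey l, ← mul_assoc, ← zpow_add]
        · refine Or.inl ⟨k + -l, ?_⟩
          rw [mul_assoc, ← mul_assoc π₁, hkey l, mul_assoc (c ^ (-l)), h₁.1, mul_one,
            ← zpow_add]
    | inv x hx ihx =>
        rcases ihx with ⟨k, rfl⟩ | ⟨k, rfl⟩
        · exact Or.inl ⟨-k, by rw [zpow_neg]⟩
        · exact Or.inr ⟨k, by rw [mul_inv_rev, hπ₁inv, ← zpow_neg, hkey (-k), neg_neg]⟩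
  have hwd : ∀ a b : {x : Fin n // x ∉ R},
      (orbitRel (Subgroup.closure {c'} : Subgroup (Equiv.Perm {x : Fin n // x ∉ R}))
        {x : Fin n // x ∉ R}) a b →
      (Quotient.mk'' a.1 : orbitRel.Quotient G (Fin n)) = Quotient.mk'' b.1 := by
    intro a b hab
    rw [orbit_rel_iff] at hab
    obtain ⟨k, hk⟩ := hab
    apply Quotient.sound'
    show a.1 ∈ MulAction.orbit G b.1
    refine MulAction.mem_orbit_iff.mpr ⟨⟨c ^ (-k), hcG (-k)⟩, ?_⟩
    show (c ^ (-k)) b.1 = a.1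
    rw [← hk, hc'z, hpoint]
    simp
  let φ : orbitRel.Quotient
        (Subgroup.closure {c'} : Subgroup (Equiv.Perm {x : Fin n // x ∉ R}))
        {x : Fin n // x ∉ R} →
      orbitRel.Quotient G (Fin n) :=
    Quotient.lift (fun a : {x : Fin n // x ∉ R} =>
      (Quotient.mk'' a.1 : orbitRel.Quotient G (Fin n))) hwd
  have hφbij : Function.Bijective φ := by
    constructor
    · intro q1 q2
      induction q1 using Quotient.inductionOn' with | h a =>
      induction q2 using Quotient.inductionOn' with | h b =>
      intro hab
      have hab' : (Quotient.mk'' a.1 : orbitRel.Quotient G (Fin n)) = Quotient.mk'' b.1 := hab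
      have hrel : a.1 ∈ MulAction.orbit G b.1 := Quotient.exact' hab'
      obtain ⟨⟨g, hg⟩, hgb⟩ := MulAction.mem_orbit_iff.mp hrel
      have hgb' : g b.1 = a.1 := hgb
      rcases hGstruct g hg with ⟨k, rfl⟩ | ⟨k, rfl⟩
      · apply Quotient.sound'
        refine (orbit_rel_iff c' a b).mpr ⟨-k, ?_⟩
        apply Subtype.ext
        rw [hc'z, ← hgb', hpoint]
        simp
      · exfalso
        apply a.2
        have h5 : (c ^ k) (π₁ b.1) = a.1 := hgb'
        rw [← h5]
        exact (hRc k _).mp (hπ₁R b.1 b.2)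
    · intro q
      induction q using Quotient.inductionOn' with | h x =>
      by_cases hx : x ∈ R
      · refine ⟨Quotient.mk'' ⟨π₁ x, (hR1 x).mp hx⟩, ?_⟩
        show (Quotient.mk'' (π₁ x) : orbitRel.Quotient G (Fin n)) = Quotient.mk'' x
        apply Quotient.sound'
        exact MulAction.mem_orbit_iff.mpr ⟨⟨π₁, hπ₁G⟩, rfl⟩
      · exact ⟨Quotient.mk'' ⟨x, hx⟩, rfl⟩
  have hJ : jointOrbitCount π₁ π₂ =
      Nat.card (orbitRel.Quotient
        (Subgroup.closure {c'} : Subgroup (Equiv.Perm {x : Fin n // x ∉ R}))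
        {x : Fin n // x ∉ R}) :=
    (Nat.card_eq_of_bijective φ hφbij).symm
  -- conclusion
  refine ⟨R, σ₁, σ₂, hR1, hR2, hmaps π₁ σ₁ hσ₁app, hmaps π₂ σ₂ hσ₂app,
    himg π₁ σ₁ hσ₁app, himg π₂ σ₂ hσ₂app, ?_⟩
  rw [hτ, Equiv.Perm.sign_ofSubtype, sign_orbit_count c', hJ, hcardRc]
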